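/- The softmax-attention flow map is Lipschitz in the initial data with exponential constant: if (x_i(t)) and (y_i(t)) are two solutions of the (SA) dynamics on S^{d-1} with n particles and parameter β > 0, then max_{j∈[n]} ‖x_j(t) - y_j(t)‖ ≤ c(β)^{nt} · max_{j∈[n]} ‖x_j(0) - y_j(0)‖ for all t ≥ 0, where c(β) = e^{10 max{1,β}}. -/
import Mathlib


open Set
open scoped RealInnerProductSpace

/-- The self-attention vector field on the sphere. -/
noncomputable def SAfield {d n : ℕ} (β : ℝ) (x : Fin n → EuclideanSpace ℝ (Fin d))
    (i : Fin n) : EuclideanSpace ℝ (Fin d) :=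
  let v := (∑ k, Real.exp (β * ⟪x i, x k⟫))⁻¹ •
      ∑ j, Real.exp (β * ⟪x i, x j⟫) • x j
  v - ⟪x i, v⟫ • x i

/-- Softmax attention weights. -/
noncomputable def SAw {d n : ℕ} (β : ℝ) (x : Fin n → EuclideanSpace ℝ (Fin d))
    (i j : Fin n) : ℝ :=
  (∑ k, Real.exp (β * ⟪x i, x k⟫))⁻¹ * Real.exp (β * ⟪x i, x j⟫)

lemma SAfield_eq' {d n : ℕ} (β : ℝ) (x : Fin n → EuclideanSpace ℝ (Fin d)) (i : Fin n) :
    SAfield β x i = (∑ j, SAw β x i j • x j) - ⟪x i, ∑ j, SAw β x i j • x j⟫ • x i := by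
  simp only [SAfield, SAw, Finset.smul_sum, smul_smul]

lemma SAw_nonneg {d n : ℕ} (β : ℝ) (x : Fin n → EuclideanSpace ℝ (Fin d)) (i j : Fin n) :
    0 ≤ SAw β x i j :=
  mul_nonneg (inv_nonneg.2 (Finset.sum_nonneg fun k _ => (Real.exp_pos _).le))
    (Real.exp_pos _).le

lemma SAw_sum_one {d n : ℕ} (hn : 0 < n) (β : ℝ) (x : Fin n → EuclideanSpace ℝ (Fin d))
    (i : Fin n) : ∑ j, SAw β x i j = 1 := by
  have : Nonempty (Fin n) := ⟨⟨0, hn⟩⟩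
  simp only [SAw]
  rw [← Finset.mul_sum]
  exact inv_mul_cancel₀ (Finset.sum_pos (fun k _ => Real.exp_pos _) Finset.univ_nonempty).ne'
/-- ℓ¹ stability of softmax under ℓ∞ perturbation of the logits. -/
lemma softmax_l1 {n : ℕ} (u v : Fin n → ℝ) {ε : ℝ} (hε : 0 ≤ ε)
    (h : ∀ j, |u j - v j| ≤ ε) :
    ∑ j, |(∑ k, Real.exp (u k))⁻¹ * Real.exp (u j)
        - (∑ k, Real.exp (v k))⁻¹ * Real.exp (v j)| ≤ 4 * ε := by
  rcases Nat.eq_zero_or_pos n with rfl | hn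
  · simp; linarith
  have : Nonempty (Fin n) := ⟨⟨0, hn⟩⟩
  set Zu := ∑ k, Real.exp (u k) with hZu
  set Zv := ∑ k, Real.exp (v k) with hZv
  have hZu0 : 0 < Zu := Finset.sum_pos (fun k _ => Real.exp_pos _) Finset.univ_nonempty
  have hZv0 : 0 < Zv := Finset.sum_pos (fun k _ => Real.exp_pos _) Finset.univ_nonempty
  set a : Fin n → ℝ := fun j => Zu⁻¹ * Real.exp (u j) with ha
  set b : Fin n → ℝ := fun j => Zv⁻¹ * Real.exp (v j) with hb
  have ha0 : ∀ j, 0 ≤ a j := fun j => by positivity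
  have hb0 : ∀ j, 0 ≤ b j := fun j => by positivity
  have hZuv : Zu ≤ Real.exp ε * Zv := by
    rw [hZu, hZv, Finset.mul_sum]
    refine Finset.sum_le_sum fun k _ => ?_
    rw [← Real.exp_add]
    exact Real.exp_le_exp.2 (by have := abs_le.1 (h k); linarith)
  have hZvu : Zv ≤ Real.exp ε * Zu := by
    rw [hZu, hZv, Finset.mul_sum]
    refine Finset.sum_le_sum fun k _ => ?_
    rw [← Real.exp_add]
    exact Real.exp_le_exp.2 (by have := abs_le.1 (h k); linarith)
  have key : ∀ j, |a j - b j| ≤ 2 * ε * a j + 2 * ε * b j := by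
    intro j
    -- b j ≥ exp(-(2ε)) * a j
    have e1 : Real.exp (-ε) * Real.exp (u j) ≤ Real.exp (v j) := by
      rw [← Real.exp_add]
      exact Real.exp_le_exp.2 (by have := abs_le.1 (h j); linarith)
    have e1' : Real.exp (-ε) * Real.exp (v j) ≤ Real.exp (u j) := by
      rw [← Real.exp_add]
      exact Real.exp_le_exp.2 (by have := abs_le.1 (h j); linarith)
    have e2 : Real.exp (-ε) * Zu⁻¹ ≤ Zv⁻¹ := by
      rw [Real.exp_neg, ← mul_inv]
      exact inv_anti₀ hZv0 hZvu
    have e2' : Real.exp (-ε) * Zv⁻¹ ≤ Zu⁻¹ := by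
      rw [Real.exp_neg, ← mul_inv]
      exact inv_anti₀ hZu0 hZuv
    have k1 : Real.exp (-(2*ε)) * a j ≤ b j := by
      have : (Real.exp (-ε) * Zu⁻¹) * (Real.exp (-ε) * Real.exp (u j)) ≤ Zv⁻¹ * Real.exp (v j) :=
        mul_le_mul e2 e1 (by positivity) (by positivity)
      calc Real.exp (-(2*ε)) * a j
          = (Real.exp (-ε) * Zu⁻¹) * (Real.exp (-ε) * Real.exp (u j)) := by
            rw [ha]; rw [show (-(2*ε)) = (-ε) + (-ε) by ring, Real.exp_add]; ring
        _ ≤ b j := this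
    have k2 : Real.exp (-(2*ε)) * b j ≤ a j := by
      have : (Real.exp (-ε) * Zv⁻¹) * (Real.exp (-ε) * Real.exp (v j)) ≤ Zu⁻¹ * Real.exp (u j) :=
        mul_le_mul e2' e1' (by positivity) (by positivity)
      calc Real.exp (-(2*ε)) * b j
          = (Real.exp (-ε) * Zv⁻¹) * (Real.exp (-ε) * Real.exp (v j)) := by
            rw [hb]; rw [show (-(2*ε)) = (-ε) + (-ε) by ring, Real.exp_add]; ring
        _ ≤ a j := this
    have hexp : 1 - 2*ε ≤ Real.exp (-(2*ε)) := by
      have := Real.add_one_le_exp (-(2*ε)); linarith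
    have hA := ha0 j; have hB := hb0 j
    rw [abs_le]
    constructor
    · nlinarith
    · nlinarith
  calc ∑ j, |a j - b j| ≤ ∑ j, (2 * ε * a j + 2 * ε * b j) := Finset.sum_le_sum fun j _ => key j
    _ = 2 * ε * (∑ j, a j) + 2 * ε * (∑ j, b j) := by
        rw [Finset.sum_add_distrib]
        congr 1
        · exact (Finset.mul_sum _ _ _).symm
        · exact (Finset.mul_sum _ _ _).symm
    _ ≤ 4 * ε := by
        have hsa : ∑ j, a j = 1 := by
          simp only [ha]; rw [← Finset.mul_sum]; exact inv_mul_cancel₀ hZu0.ne'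
        have hsb : ∑ j, b j = 1 := by
          simp only [hb]; rw [← Finset.mul_sum]; exact inv_mul_cancel₀ hZv0.ne'
        rw [hsa, hsb]; linarith
lemma SAfield_zero_of_one {d : ℕ} (β : ℝ) (z : Fin 1 → EuclideanSpace ℝ (Fin d))
    (hz : ∀ i, ‖z i‖ = 1) (i : Fin 1) : SAfield β z i = 0 := by
  have hi : i = 0 := Subsingleton.elim i 0
  subst hi
  have h1 : ⟪z 0, z 0⟫ = 1 := by
    rw [real_inner_self_eq_norm_mul_norm, hz 0]; ring
  have hw : SAw β z 0 0 = 1 := by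
    simp only [SAw, Fin.sum_univ_one]
    exact inv_mul_cancel₀ (Real.exp_pos _).ne'
  rw [SAfield_eq']
  simp only [Fin.sum_univ_one, hw, one_smul, h1, sub_self]

/-- Convex combination of unit vectors has norm at most 1. -/
lemma conv_norm_le {n : ℕ} {E : Type*} [NormedAddCommGroup E] [NormedSpace ℝ E]
    {c : Fin n → ℝ} (hc : ∀ j, 0 ≤ c j) (hc1 : ∑ j, c j = 1)
    {z : Fin n → E} (hz : ∀ j, ‖z j‖ = 1) : ‖∑ j, c j • z j‖ ≤ 1 := by
  calc ‖∑ j, c j • z j‖ ≤ ∑ j, ‖c j • z j‖ := norm_sum_le _ _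
    _ = ∑ j, c j := by
        refine Finset.sum_congr rfl fun j _ => ?_
        rw [norm_smul, Real.norm_eq_abs, abs_of_nonneg (hc j), hz j, mul_one]
    _ = 1 := hc1

lemma sum_smul_diff {n : ℕ} {E : Type*} [NormedAddCommGroup E] [NormedSpace ℝ E]
    (a b : Fin n → ℝ) (hb : ∀ j, 0 ≤ b j) (hb1 : ∑ j, b j = 1)
    {x y : Fin n → E} (hx : ∀ j, ‖x j‖ = 1)
    {M : ℝ} (hM : ∀ j, ‖x j - y j‖ ≤ M) :
    ‖(∑ j, a j • x j) - ∑ j, b j • y j‖ ≤ (∑ j, |a j - b j|) + M := by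
  have hsplit : (∑ j, a j • x j) - ∑ j, b j • y j
      = (∑ j, (a j - b j) • x j) + ∑ j, b j • (x j - y j) := by
    rw [← Finset.sum_add_distrib, ← Finset.sum_sub_distrib]
    refine Finset.sum_congr rfl fun j _ => ?_
    rw [sub_smul, smul_sub]; abel
  rw [hsplit]
  have h1 : ‖∑ j, (a j - b j) • x j‖ ≤ ∑ j, |a j - b j| := by
    calc ‖∑ j, (a j - b j) • x j‖ ≤ ∑ j, ‖(a j - b j) • x j‖ := norm_sum_le _ _
      _ = ∑ j, |a j - b j| := by
          refine Finset.sum_congr rfl fun j _ => ?_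
          rw [norm_smul, Real.norm_eq_abs, hx j, mul_one]
  have h2 : ‖∑ j, b j • (x j - y j)‖ ≤ M := by
    have hM0 : 0 ≤ M := by
      rcases Nat.eq_zero_or_pos n with rfl | hn
      · simp at hb1
      · exact le_trans (norm_nonneg _) (hM ⟨0, hn⟩)
    calc ‖∑ j, b j • (x j - y j)‖ ≤ ∑ j, ‖b j • (x j - y j)‖ := norm_sum_le _ _
      _ ≤ ∑ j, b j * M := by
          refine Finset.sum_le_sum fun j _ => ?_
          rw [norm_smul, Real.norm_eq_abs, abs_of_nonneg (hb j)]
          exact mul_le_mul_of_nonneg_left (hM j) (hb j)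
      _ = M := by rw [← Finset.sum_mul, hb1, one_mul]
  calc ‖(∑ j, (a j - b j) • x j) + ∑ j, b j • (x j - y j)‖
      ≤ ‖∑ j, (a j - b j) • x j‖ + ‖∑ j, b j • (x j - y j)‖ := norm_add_le _ _
    _ ≤ (∑ j, |a j - b j|) + M := add_le_add h1 h2

/-- Projection-part estimate. -/
lemma proj_diff_norm_le {E : Type*} [NormedAddCommGroup E] [InnerProductSpace ℝ E]
    {x y vx vy : E} (hx : ‖x‖ = 1) (hy : ‖y‖ = 1) (hvx : ‖vx‖ ≤ 1)
    {M D : ℝ} (hxy : ‖x - y‖ ≤ M) (hD : ‖vx - vy‖ ≤ D) :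
    ‖(vx - ⟪x, vx⟫ • x) - (vy - ⟪y, vy⟫ • y)‖ ≤ 2 * D + 2 * M := by
  have hsplit : (vx - ⟪x, vx⟫ • x) - (vy - ⟪y, vy⟫ • y)
      = (vx - vy) - (⟪x, vx⟫ • (x - y) + (⟪x, vx⟫ - ⟪y, vy⟫) • y) := by
    rw [smul_sub, sub_smul]; abel
  have hp : |⟪x, vx⟫| ≤ 1 := by
    calc |⟪x, vx⟫| ≤ ‖x‖ * ‖vx‖ := abs_real_inner_le_norm _ _
      _ ≤ 1 := by rw [hx, one_mul]; exact hvx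
  have hpq : |⟪x, vx⟫ - ⟪y, vy⟫| ≤ M + D := by
    have heq : ⟪x, vx⟫ - ⟪y, vy⟫ = ⟪x - y, vx⟫ + ⟪y, vx - vy⟫ := by
      rw [inner_sub_left, inner_sub_right]; ring
    rw [heq]
    calc |⟪x - y, vx⟫ + ⟪y, vx - vy⟫| ≤ |⟪x - y, vx⟫| + |⟪y, vx - vy⟫| := abs_add_le _ _
      _ ≤ ‖x - y‖ * ‖vx‖ + ‖y‖ * ‖vx - vy‖ :=
          add_le_add (abs_real_inner_le_norm _ _) (abs_real_inner_le_norm _ _)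
      _ ≤ M * 1 + 1 * D := by
          rw [hy]
          exact add_le_add (mul_le_mul hxy hvx (norm_nonneg _)
            (le_trans (norm_nonneg _) hxy)) (by simpa using hD)
      _ = M + D := by ring
  rw [hsplit]
  calc ‖(vx - vy) - (⟪x, vx⟫ • (x - y) + (⟪x, vx⟫ - ⟪y, vy⟫) • y)‖
      ≤ ‖vx - vy‖ + ‖⟪x, vx⟫ • (x - y) + (⟪x, vx⟫ - ⟪y, vy⟫) • y‖ := norm_sub_le _ _
    _ ≤ ‖vx - vy‖ + (‖⟪x, vx⟫ • (x - y)‖ + ‖(⟪x, vx⟫ - ⟪y, vy⟫) • y‖) := by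
        gcongr; exact norm_add_le _ _
    _ ≤ D + (1 * M + (M + D) * 1) := by
        refine add_le_add hD (add_le_add ?_ ?_)
        · rw [norm_smul, Real.norm_eq_abs]
          exact mul_le_mul hp hxy (norm_nonneg _) zero_le_one
        · rw [norm_smul, Real.norm_eq_abs, hy]
          exact mul_le_mul_of_nonneg_right hpq (by norm_num)
    _ = 2 * D + 2 * M := by ring

lemma SAfield_lip {d n : ℕ} (hn : 0 < n) {β : ℝ} (hβ : 0 < β)
    (x y : Fin n → EuclideanSpace ℝ (Fin d))
    (hx : ∀ i, ‖x i‖ = 1) (hy : ∀ i, ‖y i‖ = 1)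
    {M : ℝ} (hM : ∀ i, ‖x i - y i‖ ≤ M) (i : Fin n) :
    ‖SAfield β x i - SAfield β y i‖ ≤ 10 * max 1 β * n * M := by
  have hM0 : 0 ≤ M := le_trans (norm_nonneg _) (hM i)
  have hmax1 : (1:ℝ) ≤ max 1 β := le_max_left _ _
  have hmaxβ : β ≤ max 1 β := le_max_right _ _
  rcases lt_or_ge n 2 with hlt | h2
  · have hn1 : n = 1 := by omega
    subst hn1
    rw [SAfield_zero_of_one β x hx i, SAfield_zero_of_one β y hy i, sub_zero, norm_zero]
    positivity
  · have hS : ∑ j, |SAw β x i j - SAw β y i j| ≤ 4 * (2 * β * M) := by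
      simp only [SAw]
      refine softmax_l1 (fun j => β * ⟪x i, x j⟫) (fun j => β * ⟪y i, y j⟫)
        (by positivity) ?_
      intro j
      have heq : β * ⟪x i, x j⟫ - β * ⟪y i, y j⟫
          = β * (⟪x i - y i, x j⟫ + ⟪y i, x j - y j⟫) := by
        rw [inner_sub_left, inner_sub_right]; ring
      rw [heq, abs_mul, abs_of_pos hβ]
      have h1 : |⟪x i - y i, x j⟫ + ⟪y i, x j - y j⟫| ≤ 2 * M := by
        calc |⟪x i - y i, x j⟫ + ⟪y i, x j - y j⟫|
            ≤ |⟪x i - y i, x j⟫| + |⟪y i, x j - y j⟫| := abs_add_le _ _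
          _ ≤ ‖x i - y i‖ * ‖x j‖ + ‖y i‖ * ‖x j - y j‖ :=
              add_le_add (abs_real_inner_le_norm _ _) (abs_real_inner_le_norm _ _)
          _ ≤ M * 1 + 1 * M := by
              rw [hx j, hy i]
              exact add_le_add (by simpa using hM i) (by simpa using hM j)
          _ = 2 * M := by ring
      calc β * |⟪x i - y i, x j⟫ + ⟪y i, x j - y j⟫| ≤ β * (2 * M) :=
            mul_le_mul_of_nonneg_left h1 hβ.le
        _ = 2 * β * M := by ring
    have hD : ‖(∑ j, SAw β x i j • x j) - ∑ j, SAw β y i j • y j‖ ≤ 8 * β * M + M := by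
      calc ‖(∑ j, SAw β x i j • x j) - ∑ j, SAw β y i j • y j‖
          ≤ (∑ j, |SAw β x i j - SAw β y i j|) + M :=
            sum_smul_diff _ _ (SAw_nonneg β y i) (SAw_sum_one hn β y i) hx hM
        _ ≤ 8 * β * M + M := by linarith
    have hvx : ‖∑ j, SAw β x i j • x j‖ ≤ 1 :=
      conv_norm_le (SAw_nonneg β x i) (SAw_sum_one hn β x i) hx
    rw [SAfield_eq' β x i, SAfield_eq' β y i]
    have hmain := proj_diff_norm_le (hx i) (hy i) hvx (hM i) hD
    have hn2 : (2:ℝ) ≤ (n:ℝ) := by exact_mod_cast h2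
    calc ‖((∑ j, SAw β x i j • x j) - ⟪x i, ∑ j, SAw β x i j • x j⟫ • x i)
          - ((∑ j, SAw β y i j • y j) - ⟪y i, ∑ j, SAw β y i j • y j⟫ • y i)‖
        ≤ 2 * (8 * β * M + M) + 2 * M := hmain
      _ ≤ 10 * max 1 β * n * M := by
          nlinarith [mul_nonneg hM0 (sub_nonneg.2 hmaxβ), mul_nonneg hM0 (sub_nonneg.2 hmax1),
            mul_nonneg (mul_nonneg (by linarith : (0:ℝ) ≤ max 1 β) hM0)
              (by linarith : (0:ℝ) ≤ (n:ℝ) - 2)]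

/-- Lipschitz dependence of the self-attention flow on the initial data: for two
solutions `x, y` of the (SA) dynamics,
`max_j ‖x_j(t) - y_j(t)‖ ≤ c(β)^{nt} max_j ‖x_j(0) - y_j(0)‖` with
`c(β) = e^{10 max{1,β}}`. -/
theorem stmt_15 {d n : ℕ} (hn : 0 < n) (β : ℝ) (hβ : 0 < β)
    (x y : Fin n → ℝ → EuclideanSpace ℝ (Fin d))
    (hxs : ∀ i t, x i t ∈ Metric.sphere (0 : EuclideanSpace ℝ (Fin d)) 1)
    (hys : ∀ i t, y i t ∈ Metric.sphere (0 : EuclideanSpace ℝ (Fin d)) 1)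
    (hxode : ∀ i, ∀ t ∈ Ici (0:ℝ),
      HasDerivAt (x i) (SAfield β (fun j => x j t) i) t)
    (hyode : ∀ i, ∀ t ∈ Ici (0:ℝ),
      HasDerivAt (y i) (SAfield β (fun j => y j t) i) t) :
    ∀ t ∈ Ici (0:ℝ), ∀ j : Fin n,
      ‖x j t - y j t‖ ≤
        Real.exp (10 * max 1 β) ^ ((n : ℝ) * t) * ⨆ i, ‖x i 0 - y i 0‖ := by
  intro T hT j
  have hT0 : (0:ℝ) ≤ T := hT
  have : Nonempty (Fin n) := ⟨⟨0, hn⟩⟩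
  have hx1 : ∀ i t, ‖x i t‖ = 1 := fun i t => by
    have := hxs i t; rwa [mem_sphere_zero_iff_norm] at this
  have hy1 : ∀ i t, ‖y i t‖ = 1 := fun i t => by
    have := hys i t; rwa [mem_sphere_zero_iff_norm] at this
  set f : ℝ → (Fin n → EuclideanSpace ℝ (Fin d)) := fun t i => x i t - y i t with hf
  set g : ℝ → (Fin n → EuclideanSpace ℝ (Fin d)) :=
    fun t i => SAfield β (fun j => x j t) i - SAfield β (fun j => y j t) i with hg
  have hderiv : ∀ t ∈ Ici (0:ℝ), HasDerivAt f (g t) t := by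
    intro t ht
    rw [hasDerivAt_pi]
    intro i
    exact (hxode i t ht).sub (hyode i t ht)
  set K : ℝ := 10 * max 1 β * n with hK
  have hK0 : 0 ≤ K := by
    rw [hK]
    have : (1:ℝ) ≤ max 1 β := le_max_left _ _
    positivity
  set δ : ℝ := ⨆ i, ‖x i 0 - y i 0‖ with hδ
  have hδ0 : 0 ≤ δ := by
    rw [hδ]
    exact le_trans (norm_nonneg _)
      (le_ciSup (Set.Finite.bddAbove (Set.finite_range fun i => ‖x i 0 - y i 0‖))
        (⟨0, hn⟩ : Fin n))
  have hδle : ‖f 0‖ ≤ δ := by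
    rw [pi_norm_le_iff_of_nonneg hδ0]
    intro i
    exact le_ciSup (Set.Finite.bddAbove (Set.finite_range fun i => ‖x i 0 - y i 0‖)) i
  have hbound : ∀ t ∈ Ico (0:ℝ) T, ‖g t‖ ≤ K * ‖f t‖ + 0 := by
    intro t _
    rw [add_zero]
    have hKf : 0 ≤ K * ‖f t‖ := mul_nonneg hK0 (norm_nonneg _)
    rw [pi_norm_le_iff_of_nonneg hKf]
    intro i
    have hMt : ∀ k, ‖x k t - y k t‖ ≤ ‖f t‖ := fun k => norm_le_pi_norm (f t) k
    calc ‖g t i‖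
        = ‖SAfield β (fun j => x j t) i - SAfield β (fun j => y j t) i‖ := rfl
      _ ≤ 10 * max 1 β * n * ‖f t‖ :=
          SAfield_lip hn hβ (fun k => x k t) (fun k => y k t)
            (fun k => hx1 k t) (fun k => hy1 k t) hMt i
      _ = K * ‖f t‖ := by rw [hK]
  have hcont : ContinuousOn f (Icc 0 T) := fun t ht =>
    (hderiv t ht.1).continuousAt.continuousWithinAt
  have hgb := norm_le_gronwallBound_of_norm_deriv_right_le hcont
    (fun t ht => (hderiv t ht.1).hasDerivWithinAt) hδle hbound T (right_mem_Icc.2 hT0)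
  rw [gronwallBound_ε0, sub_zero] at hgb
  have hexp : Real.exp (10 * max 1 β) ^ ((n:ℝ) * T) = Real.exp (K * T) := by
    rw [Real.rpow_def_of_pos (Real.exp_pos _), Real.log_exp, hK]
    congr 1; ring
  rw [hexp]
  calc ‖x j T - y j T‖ ≤ ‖f T‖ := norm_le_pi_norm (f T) j
    _ ≤ δ * Real.exp (K * T) := hgb
    _ = Real.exp (K * T) * δ := mul_comm _ _
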